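/- For 1 < κ < 2, the function s ↦ log((1 - s(κ-1))/(1-s)) + log B(s + κ(1-s), 2-κ) is convex on (0,1); consequently the function F(s) = (1-s(κ-1))B(s+κ(1-s),2-κ)/(1-s) + (1-(1-s)(κ-1))B((1-s)+κs,2-κ)/s is convex on (0,1) and, being invariant under s ↦ 1-s, attains its minimum at s = 1/2. -/

import Mathlib

noncomputable def betaFn (x y : ℝ) : ℝ := Real.Gamma x * Real.Gamma y / Real.Gamma (x + y)

open Set MeasureTheory Real

/-- The beta integrand is integrable on `Ioo 0 1`. -/
lemma betaIntegrand_integrableOn {u v : ℝ} (hu : 0 < u) (hv : 0 < v) :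
    IntegrableOn (fun x : ℝ => x ^ (u - 1) * (1 - x) ^ (v - 1)) (Ioo 0 1) := by
  have h := Complex.betaIntegral_convergent (u := (u : ℂ)) (v := (v : ℂ)) (by simpa) (by simpa)
  rw [intervalIntegrable_iff_integrableOn_Ioc_of_le zero_le_one] at h
  have h2 : IntegrableOn
      (fun x : ℝ => ((x : ℂ) ^ ((u : ℂ) - 1) * (1 - (x : ℂ)) ^ ((v : ℂ) - 1)).re)
      (Ioo (0:ℝ) 1) := (h.mono_set Ioo_subset_Ioc_self).re
  refine h2.congr_fun (fun x hx => ?_) measurableSet_Ioo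
  have hx0 : (0:ℝ) ≤ x := hx.1.le
  have hx1 : (0:ℝ) ≤ 1 - x := by linarith [hx.2]
  have e1 : ((x : ℂ)) ^ ((u : ℂ) - 1) = ((x ^ (u - 1) : ℝ) : ℂ) := by
    rw [Complex.ofReal_cpow hx0]; push_cast; ring_nf
  have e2 : (1 - (x : ℂ)) ^ ((v : ℂ) - 1) = (((1 - x) ^ (v - 1) : ℝ) : ℂ) := by
    rw [Complex.ofReal_cpow hx1]; push_cast; ring_nf
  dsimp only
  rw [e1, e2, ← Complex.ofReal_mul, Complex.ofReal_re]

/-- betaFn equals the Euler integral. -/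
lemma betaFn_eq_integral {t c : ℝ} (ht : 0 < t) (hc : 0 < c) :
    betaFn t c = ∫ x in Ioo (0:ℝ) 1, x ^ (t - 1) * (1 - x) ^ (c - 1) := by
  have h := Complex.Gamma_mul_Gamma_eq_betaIntegral (s := (t : ℂ)) (t := (c : ℂ))
    (by simpa) (by simpa)
  have hBI : Complex.betaIntegral (t : ℂ) (c : ℂ)
      = ((∫ x in (0:ℝ)..1, x ^ (t - 1) * (1 - x) ^ (c - 1) : ℝ) : ℂ) := by
    rw [Complex.betaIntegral, ← intervalIntegral.integral_ofReal]
    refine intervalIntegral.integral_congr fun x hx => ?_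
    rw [Set.uIcc_of_le zero_le_one] at hx
    have hx0 : (0:ℝ) ≤ x := hx.1
    have hx1 : (0:ℝ) ≤ 1 - x := by linarith [hx.2]
    rw [Complex.ofReal_mul, Complex.ofReal_cpow hx0, Complex.ofReal_cpow hx1]
    push_cast
    ring_nf
  rw [hBI, ← Complex.ofReal_add, Complex.Gamma_ofReal, Complex.Gamma_ofReal,
    Complex.Gamma_ofReal, ← Complex.ofReal_mul, ← Complex.ofReal_mul] at h
  have h' : Real.Gamma t * Real.Gamma c
      = Real.Gamma (t + c) * ∫ x in (0:ℝ)..1, x ^ (t - 1) * (1 - x) ^ (c - 1) := by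
    exact_mod_cast h
  have hG : Real.Gamma (t + c) ≠ 0 := (Real.Gamma_pos_of_pos (by linarith)).ne'
  rw [betaFn, h', intervalIntegral.integral_of_le zero_le_one,
    MeasureTheory.integral_Ioc_eq_integral_Ioo]
  field_simp

lemma betaFn_pos {t c : ℝ} (ht : 0 < t) (hc : 0 < c) : 0 < betaFn t c :=
  div_pos (mul_pos (Real.Gamma_pos_of_pos ht) (Real.Gamma_pos_of_pos hc))
    (Real.Gamma_pos_of_pos (by linarith))

/-- Log-convexity of the beta function in its first argument, multiplicative form,
via Hölder's inequality on the Euler integral. -/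
lemma betaFn_add_le_rpow_mul_rpow {c s t a b : ℝ} (hc : 0 < c) (hs : 0 < s) (ht : 0 < t)
    (ha : 0 < a) (hb : 0 < b) (hab : a + b = 1) :
    betaFn (a * s + b * t) c ≤ betaFn s c ^ a * betaFn t c ^ b := by
  let f : ℝ → ℝ → ℝ → ℝ := fun d u x => x ^ (d * (u - 1)) * (1 - x) ^ (d * (c - 1))
  have e : Real.HolderConjugate (1 / a) (1 / b) := Real.holderConjugate_one_div ha hb hab
  have hst : 0 < a * s + b * t := by positivity
  have posf : ∀ d u x : ℝ, x ∈ Ioo (0:ℝ) 1 → 0 ≤ f d u x := fun d u x hx =>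
    mul_nonneg (rpow_nonneg hx.1.le _) (rpow_nonneg (by linarith [hx.2]) _)
  have posf' : ∀ d u : ℝ, ∀ᵐ x : ℝ ∂volume.restrict (Ioo 0 1), 0 ≤ f d u x := fun d u =>
    (ae_restrict_iff' measurableSet_Ioo).mpr (ae_of_all _ (posf d u))
  have fpow : ∀ {d x : ℝ}, 0 < d → ∀ (u : ℝ), x ∈ Ioo (0:ℝ) 1 →
      x ^ (u - 1) * (1 - x) ^ (c - 1) = f d u x ^ (1 / d) := by
    intro d x hd u hx
    dsimp only [f]
    rw [mul_rpow (rpow_nonneg hx.1.le _) (rpow_nonneg (by linarith [hx.2]) _),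
      ← rpow_mul hx.1.le, ← rpow_mul (by linarith [hx.2])]
    congr 2 <;> field_simp
  have contf : ∀ d u : ℝ, ContinuousOn (f d u) (Ioo 0 1) := by
    intro d u
    apply ContinuousOn.mul
    · refine continuousOn_of_forall_continuousAt fun x hx => ?_
      exact Real.continuousAt_rpow_const _ _ (Or.inl hx.1.ne')
    · refine continuousOn_of_forall_continuousAt fun x hx => ?_
      exact (Real.continuousAt_rpow_const _ _ (Or.inl (by intro h; nlinarith [hx.2] : (1:ℝ) - x ≠ 0))).comp
        ((continuous_const.sub continuous_id).continuousAt)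
  have f_mem_Lp : ∀ {d u : ℝ}, 0 < d → 0 < u →
      MemLp (f d u) (ENNReal.ofReal (1 / d)) (volume.restrict (Ioo 0 1)) := by
    intro d u hd hu
    have A : ENNReal.ofReal (1 / d) ≠ 0 := by
      rwa [Ne, ENNReal.ofReal_eq_zero, not_le, one_div_pos]
    have B : ENNReal.ofReal (1 / d) ≠ ⊤ := ENNReal.ofReal_ne_top
    rw [← memLp_norm_rpow_iff _ A B, ENNReal.toReal_ofReal (one_div_nonneg.mpr hd.le),
      ENNReal.div_self A B, memLp_one_iff_integrable]
    · apply Integrable.congr (betaIntegrand_integrableOn hu hc)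
      refine Filter.eventuallyEq_of_mem (self_mem_ae_restrict measurableSet_Ioo) fun x hx => ?_
      rw [fpow hd u hx]
      congr 1
      exact (norm_of_nonneg (posf _ _ x hx)).symm
    · exact (contf d u).aestronglyMeasurable measurableSet_Ioo
  rw [betaFn_eq_integral hst hc, betaFn_eq_integral hs hc, betaFn_eq_integral ht hc]
  convert MeasureTheory.integral_mul_le_Lp_mul_Lq_of_nonneg e (posf' a s) (posf' b t)
    (f_mem_Lp ha hs) (f_mem_Lp hb ht) using 1
  · refine setIntegral_congr_fun measurableSet_Ioo fun x hx => ?_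
    dsimp only [f]
    have hx0 : (0:ℝ) < x := hx.1
    have hx1 : (0:ℝ) < 1 - x := by linarith [hx.2]
    have A : x ^ (a * s + b * t - 1) = x ^ (a * (s - 1)) * x ^ (b * (t - 1)) := by
      rw [← rpow_add hx0]; congr 1; linarith
    have B : (1 - x) ^ (c - 1) = (1 - x) ^ (a * (c - 1)) * (1 - x) ^ (b * (c - 1)) := by
      rw [← rpow_add hx1]; congr 1; nlinarith
    rw [A, B]; ring
  · rw [one_div_one_div, one_div_one_div]
    congr 2 <;> exact setIntegral_congr_fun measurableSet_Ioo fun x hx => fpow (by assumption) _ hx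

lemma convexOn_log_betaFn {c : ℝ} (hc : 0 < c) :
    ConvexOn ℝ (Ioi (0:ℝ)) (fun t => Real.log (betaFn t c)) := by
  refine convexOn_iff_forall_pos.mpr ⟨convex_Ioi _, fun x hx y hy a b ha hb hab => ?_⟩
  have key := betaFn_add_le_rpow_mul_rpow hc (mem_Ioi.mp hx) (mem_Ioi.mp hy) ha hb hab
  have h1 : 0 < betaFn (a * x + b * y) c := betaFn_pos
    (by have hx' := mem_Ioi.mp hx; have hy' := mem_Ioi.mp hy; positivity) hc
  have h2 : 0 < betaFn x c := betaFn_pos (mem_Ioi.mp hx) hc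
  have h3 : 0 < betaFn y c := betaFn_pos (mem_Ioi.mp hy) hc
  simp only [smul_eq_mul]
  calc Real.log (betaFn (a * x + b * y) c) ≤ Real.log (betaFn x c ^ a * betaFn y c ^ b) :=
        Real.log_le_log h1 key
    _ = a * Real.log (betaFn x c) + b * Real.log (betaFn y c) := by
        rw [Real.log_mul (by positivity) (by positivity), Real.log_rpow h2, Real.log_rpow h3]

lemma convexOn_betaFn {c : ℝ} (hc : 0 < c) :
    ConvexOn ℝ (Ioi (0:ℝ)) (fun t => betaFn t c) := by
  refine convexOn_iff_forall_pos.mpr ⟨convex_Ioi _, fun x hx y hy a b ha hb hab => ?_⟩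
  have key := betaFn_add_le_rpow_mul_rpow hc (mem_Ioi.mp hx) (mem_Ioi.mp hy) ha hb hab
  have h2 : 0 < betaFn x c := betaFn_pos (mem_Ioi.mp hx) hc
  have h3 : 0 < betaFn y c := betaFn_pos (mem_Ioi.mp hy) hc
  simp only [smul_eq_mul]
  calc betaFn (a * x + b * y) c ≤ betaFn x c ^ a * betaFn y c ^ b := key
    _ ≤ a * betaFn x c + b * betaFn y c :=
        Real.geom_mean_le_arith_mean2_weighted ha.le hb.le h2.le h3.le hab

/-- Convexity transfers along affine precomposition, restricted to `Ioo 0 1`. -/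
lemma convexOn_comp_affine {f : ℝ → ℝ} (hf : ConvexOn ℝ (Ioi (0:ℝ)) f) (p q : ℝ)
    (h : ∀ s ∈ Ioo (0:ℝ) 1, p * s + q ∈ Ioi (0:ℝ)) :
    ConvexOn ℝ (Ioo (0:ℝ) 1) (fun s => f (p * s + q)) := by
  refine ⟨convex_Ioo _ _, fun x hx y hy a b ha hb hab => ?_⟩
  simp only [smul_eq_mul]
  have harg : p * (a * x + b * y) + q = a * (p * x + q) + b * (p * y + q) := by
    linear_combination (-q) * hab
  rw [harg]
  exact hf.2 (h x hx) (h y hy) ha hb hab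

lemma ConvexOn.congr' {s : Set ℝ} {f g : ℝ → ℝ} (hf : ConvexOn ℝ s f)
    (h : ∀ x ∈ s, f x = g x) : ConvexOn ℝ s g := by
  refine ⟨hf.1, fun x hx y hy a b ha hb hab => ?_⟩
  rw [← h x hx, ← h y hy, ← h _ (hf.1 hx hy ha hb hab)]
  exact hf.2 hx hy ha hb hab

/-- Key identity: the first summand of `F` is `(κ-1)·B((1-s)(κ-1), 2-κ)`. -/
lemma key_id {κ : ℝ} (hκ1 : 1 < κ) (hκ2 : κ < 2) {s : ℝ} (hs : s ∈ Ioo (0:ℝ) 1) :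
    (1 - s * (κ - 1)) * betaFn (s + κ * (1 - s)) (2 - κ) / (1 - s)
      = (κ - 1) * betaFn ((1 - s) * (κ - 1)) (2 - κ) := by
  obtain ⟨hs0, hs1⟩ := hs
  have hy0 : 0 < (1 - s) * (κ - 1) := by nlinarith
  have hyc : 0 < (1 - s) * (κ - 1) + (2 - κ) := by nlinarith
  have h1 : s + κ * (1 - s) = (1 - s) * (κ - 1) + 1 := by ring
  have h2 : s + κ * (1 - s) + (2 - κ) = ((1 - s) * (κ - 1) + (2 - κ)) + 1 := by ring
  have h3 : 1 - s * (κ - 1) = (1 - s) * (κ - 1) + (2 - κ) := by ring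
  rw [betaFn, betaFn, h2, h1, Real.Gamma_add_one hy0.ne', Real.Gamma_add_one hyc.ne', h3]
  have hG : Real.Gamma ((1 - s) * (κ - 1) + (2 - κ)) ≠ 0 := (Real.Gamma_pos_of_pos hyc).ne'
  have hs1' : (1:ℝ) - s ≠ 0 := by linarith
  field_simp

lemma key_id2 {κ : ℝ} (hκ1 : 1 < κ) (hκ2 : κ < 2) {s : ℝ} (hs : s ∈ Ioo (0:ℝ) 1) :
    (1 - (1 - s) * (κ - 1)) * betaFn ((1 - s) + κ * s) (2 - κ) / s
      = (κ - 1) * betaFn (s * (κ - 1)) (2 - κ) := by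
  have hs' : (1 - s) ∈ Ioo (0:ℝ) 1 := ⟨by linarith [hs.2], by linarith [hs.1]⟩
  have := key_id hκ1 hκ2 hs'
  rw [show (1:ℝ) - (1 - s) = s by ring] at this
  exact this

theorem convexity_and_min_at_half (κ : ℝ) (hκ1 : 1 < κ) (hκ2 : κ < 2) :
    ConvexOn ℝ (Set.Ioo (0:ℝ) 1)
      (fun s => Real.log ((1 - s * (κ - 1)) / (1 - s)) +
        Real.log (betaFn (s + κ * (1 - s)) (2 - κ))) ∧
    ConvexOn ℝ (Set.Ioo (0:ℝ) 1)
      (fun s => (1 - s * (κ - 1)) * betaFn (s + κ * (1 - s)) (2 - κ) / (1 - s) +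
        (1 - (1 - s) * (κ - 1)) * betaFn ((1 - s) + κ * s) (2 - κ) / s) ∧
    ∀ s ∈ Set.Ioo (0:ℝ) 1,
      (1 - (1/2 : ℝ) * (κ - 1)) * betaFn ((1/2 : ℝ) + κ * (1 - (1/2 : ℝ))) (2 - κ) / (1 - (1/2 : ℝ)) +
        (1 - (1 - (1/2 : ℝ)) * (κ - 1)) * betaFn ((1 - (1/2 : ℝ)) + κ * (1/2 : ℝ)) (2 - κ) / (1/2 : ℝ)
      ≤ (1 - s * (κ - 1)) * betaFn (s + κ * (1 - s)) (2 - κ) / (1 - s) +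
        (1 - (1 - s) * (κ - 1)) * betaFn ((1 - s) + κ * s) (2 - κ) / s := by
  have hκ' : (0:ℝ) < κ - 1 := by linarith
  have hc : (0:ℝ) < 2 - κ := by linarith
  -- convexity of the symmetric "nice" form G
  have hmap1 : ∀ s ∈ Ioo (0:ℝ) 1, -(κ-1) * s + (κ-1) ∈ Ioi (0:ℝ) := by
    intro s hs; simp only [mem_Ioi]; nlinarith [hs.1, hs.2]
  have hmap2 : ∀ s ∈ Ioo (0:ℝ) 1, (κ-1) * s + 0 ∈ Ioi (0:ℝ) := by
    intro s hs; simp only [mem_Ioi]; nlinarith [hs.1, hs.2]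
  have harg1 : ∀ s : ℝ, -(κ-1) * s + (κ-1) = (1 - s) * (κ - 1) := by intro s; ring
  have harg2 : ∀ s : ℝ, (κ-1) * s + 0 = s * (κ - 1) := by intro s; ring
  have hG : ConvexOn ℝ (Ioo (0:ℝ) 1) (fun s =>
      (κ - 1) * betaFn ((1 - s) * (κ - 1)) (2 - κ) +
      (κ - 1) * betaFn (s * (κ - 1)) (2 - κ)) := by
    have c1 := (convexOn_comp_affine (convexOn_betaFn hc) (-(κ-1)) (κ-1) hmap1).smul hκ'.le
    have c2 := (convexOn_comp_affine (convexOn_betaFn hc) (κ-1) 0 hmap2).smul hκ'.le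
    refine (c1.add c2).congr' fun x hx => ?_
    simp only [Pi.add_apply, smul_eq_mul, harg1, harg2]
  -- pointwise equality of F with G on Ioo 0 1
  have hFG : ∀ s ∈ Ioo (0:ℝ) 1,
      (1 - s * (κ - 1)) * betaFn (s + κ * (1 - s)) (2 - κ) / (1 - s) +
        (1 - (1 - s) * (κ - 1)) * betaFn ((1 - s) + κ * s) (2 - κ) / s
      = (κ - 1) * betaFn ((1 - s) * (κ - 1)) (2 - κ) +
        (κ - 1) * betaFn (s * (κ - 1)) (2 - κ) := by
    intro s hs
    rw [key_id hκ1 hκ2 hs, key_id2 hκ1 hκ2 hs]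
  refine ⟨?_, ?_, ?_⟩
  · -- part 1 : log-convexity
    have hL : ConvexOn ℝ (Ioo (0:ℝ) 1) (fun s =>
        Real.log (κ - 1) + Real.log (betaFn (-(κ-1) * s + (κ-1)) (2 - κ))) :=
      (convexOn_const _ (convex_Ioo _ _)).add
        (convexOn_comp_affine (convexOn_log_betaFn hc) (-(κ-1)) (κ-1) hmap1)
    refine hL.congr' fun s hs => ?_
    obtain ⟨hs0, hs1⟩ := hs
    have hs1' : (0:ℝ) < 1 - s := by linarith
    have hA : 0 < 1 - s * (κ - 1) := by nlinarith
    have hx : 0 < s + κ * (1 - s) := by nlinarith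
    have hB : 0 < betaFn (s + κ * (1 - s)) (2 - κ) := betaFn_pos hx hc
    have hy : 0 < (1 - s) * (κ - 1) := by nlinarith
    have hB' : 0 < betaFn ((1 - s) * (κ - 1)) (2 - κ) := betaFn_pos hy hc
    rw [harg1 s, ← Real.log_mul hκ'.ne' hB'.ne', ← key_id hκ1 hκ2 ⟨hs0, hs1⟩,
      show (1 - s * (κ - 1)) * betaFn (s + κ * (1 - s)) (2 - κ) / (1 - s)
        = ((1 - s * (κ - 1)) / (1 - s)) * betaFn (s + κ * (1 - s)) (2 - κ) from by ring,
      Real.log_mul (div_pos hA hs1').ne' hB.ne']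
  · -- part 2 : convexity of F
    exact hG.congr' fun s hs => (hFG s hs).symm
  · -- part 3 : minimum at 1/2
    intro s hs
    have hs' : (1 - s) ∈ Ioo (0:ℝ) 1 := ⟨by linarith [hs.2], by linarith [hs.1]⟩
    have hhalf : (1/2 : ℝ) ∈ Ioo (0:ℝ) 1 := by norm_num
    have hGsym : (κ - 1) * betaFn ((1 - (1-s)) * (κ - 1)) (2 - κ) +
        (κ - 1) * betaFn ((1-s) * (κ - 1)) (2 - κ)
        = (κ - 1) * betaFn ((1 - s) * (κ - 1)) (2 - κ) +
          (κ - 1) * betaFn (s * (κ - 1)) (2 - κ) := by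
      rw [show (1:ℝ) - (1 - s) = s by ring]; ring
    have hcomb := hG.2 hs hs' (by norm_num : (0:ℝ) ≤ 1/2) (by norm_num : (0:ℝ) ≤ 1/2)
      (by norm_num)
    simp only [smul_eq_mul] at hcomb
    rw [show (1/2 : ℝ) * s + 1/2 * (1 - s) = 1/2 by ring] at hcomb
    rw [hFG s hs, hFG (1/2 : ℝ) hhalf]
    rw [hGsym] at hcomb
    linarith
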